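/- Let π₁,…,πₙ, r₁,…,rₙ ∈ [0,1]. Define the four cell probabilities qᵢ = (πᵢrᵢ, πᵢ(1−rᵢ), (1−πᵢ)rᵢ, (1−πᵢ)(1−rᵢ)) for each i, let Σ_μ = ∑ᵢ (diag(qᵢ) − qᵢqᵢᵀ) be the covariance matrix of the sum of independent categorical variables with probabilities qᵢ, and let Σ_p = n(diag(q̄) − q̄q̄ᵀ) with q̄ = (1/n)∑ᵢ qᵢ be the covariance of the corresponding multinomial. Then Σ_p − Σ_μ is positive semidefinite. -/

import Mathlib

open Matrix

lemma psd_vvT {m : Type*} [Fintype m] [DecidableEq m] (v : m → ℝ) :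
    (vecMulVec v v).PosSemidef := by
  have h : vecMulVec v v = (replicateRow Unit v)ᴴ * replicateRow Unit v := by
    ext i j
    simp [vecMulVec_apply, mul_apply, replicateRow_apply, conjTranspose_apply]
  rw [h]
  exact posSemidef_conjTranspose_mul_self _

theorem stmt16 (n : ℕ) (hn : 0 < n) (π r : Fin n → ℝ)
    (hπ : ∀ i, π i ∈ Set.Icc (0 : ℝ) 1) (hr : ∀ i, r i ∈ Set.Icc (0 : ℝ) 1)
    (q : Fin n → Fin 4 → ℝ)
    (hq : ∀ i, q i = ![π i * r i, π i * (1 - r i), (1 - π i) * r i, (1 - π i) * (1 - r i)])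
    (qbar : Fin 4 → ℝ) (hqbar : qbar = (n : ℝ)⁻¹ • ∑ i, q i)
    (Sμ Sp : Matrix (Fin 4) (Fin 4) ℝ)
    (hSμ : Sμ = ∑ i, (Matrix.diagonal (q i) - vecMulVec (q i) (q i)))
    (hSp : Sp = (n : ℝ) • (Matrix.diagonal qbar - vecMulVec qbar qbar)) :
    (Sp - Sμ).PosSemidef := by
  have hne : (n : ℝ) ≠ 0 := Nat.cast_ne_zero.mpr hn.ne'
  have hS : ∀ j, ∑ i, q i j = (n : ℝ) * qbar j := by
    intro j
    rw [hqbar]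
    simp only [Pi.smul_apply, Finset.sum_apply, smul_eq_mul]
    field_simp
  have key : Sp - Sμ = ∑ i, vecMulVec (q i - qbar) (q i - qbar) := by
    ext j k
    simp only [hSμ, hSp, Matrix.sub_apply, Matrix.smul_apply, Matrix.sum_apply,
      vecMulVec_apply, Pi.sub_apply, smul_eq_mul]
    have expand : ∀ i : Fin n, (q i j - qbar j) * (q i k - qbar k)
        = q i j * q i k - qbar j * q i k - q i j * qbar k + qbar j * qbar k := fun i => by ring
    rw [Finset.sum_congr rfl (fun i _ => expand i)]
    simp only [Finset.sum_add_distrib, Finset.sum_sub_distrib, ← Finset.mul_sum,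
      ← Finset.sum_mul, Finset.sum_const, Finset.card_univ, Fintype.card_fin, nsmul_eq_mul,
      hS]
    by_cases h : j = k
    · subst h
      simp only [Matrix.diagonal_apply_eq, hS]
      ring
    · simp only [Matrix.diagonal_apply_ne _ h, Finset.sum_const_zero]
      ring
  rw [key]
  exact Finset.sum_induction _ _ (fun _ _ ha hb => ha.add hb) Matrix.PosSemidef.zero
    (fun i _ => psd_vvT _)
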